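/- The semiring Z₇ satisfies the identity u ≈ v if and only if for every variable x, the number of entries of u equal to the one-letter word x is odd exactly when the number of entries of v equal to the one-letter word x is odd (equivalently, { w : |w| = 1, occ(w,u) is odd } = { w : |w| = 1, occ(w,v) is odd }). -/

import Mathlib

/-- The value in `Bool` (under multiplication `mul` and assignment `φ`) of a word,
i.e. a nonempty list of variables: the product of the images of its letters, in order.
(The value `false` on the empty list is junk; words are required to be nonempty.) -/
def wordVal (mul : Bool → Bool → Bool) (φ : ℕ → Bool) : List ℕ → Bool
  | [] => false
  | a :: rest => rest.foldl (fun acc x => mul acc (φ x)) (φ a)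

/-- The value of a term, i.e. a nonempty list of words: the sum (under `add`) of the
values of its entries. (The value `false` on the empty list is junk; terms are
required to be nonempty.) -/
def termVal (add mul : Bool → Bool → Bool) (φ : ℕ → Bool) : List (List ℕ) → Bool
  | [] => false
  | w :: rest => rest.foldl (fun acc q => add acc (wordVal mul φ q)) (wordVal mul φ w)

/-- The two-element semiring on `Bool` with addition `add` and multiplication `mul`
satisfies the identity `u ≈ v`. -/
def Satisfies (add mul : Bool → Bool → Bool) (u v : List (List ℕ)) : Prop :=
  ∀ φ : ℕ → Bool, termVal add mul φ u = termVal add mul φ v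

lemma foldl_const_false (φ : ℕ → Bool) (l : List ℕ) :
    l.foldl (fun acc x => (fun _ _ => false) acc (φ x)) false = false := by
  induction l with
  | nil => rfl
  | cons a t ih => simpa using ih

lemma wordVal_eq (φ : ℕ → Bool) (w : List ℕ) :
    wordVal (fun _ _ => false) φ w = (decide (w.length = 1) && φ w.head!) := by
  match w with
  | [] => rfl
  | [a] => simp [wordVal]
  | a :: b :: t => simpa [wordVal] using foldl_const_false φ t

lemma foldl_xor (g : List ℕ → Bool) (u : List (List ℕ)) (b : Bool) :
    u.foldl (fun acc w => xor acc (g w)) b = xor b (decide (Odd (u.countP g))) := by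
  induction u generalizing b with
  | nil => simp
  | cons w t ih =>
    rw [List.foldl_cons, ih, List.countP_cons]
    cases hg : g w
    · simp
    · simp only [if_pos rfl, Nat.odd_add_one]
      cases b <;> cases hd : decide (Odd (t.countP g)) <;>
        simp_all [Nat.odd_add_one]

lemma termVal_eq (φ : ℕ → Bool) (u : List (List ℕ)) :
    termVal (fun x y => xor x y) (fun _ _ => false) φ u =
      decide (Odd (u.countP (fun w => decide (w.length = 1) && φ w.head!))) := by
  match u with
  | [] => rfl
  | w :: t =>
    show t.foldl (fun acc q => xor acc (wordVal (fun _ _ => false) φ q)) _ = _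
    rw [foldl_xor, List.countP_cons]
    simp only [wordVal_eq]
    rw [show t.countP (fun q => wordVal (fun _ _ => false) φ q)
          = t.countP (fun w => decide (w.length = 1) && φ w.head!) from
        List.countP_congr (fun a _ => by simp [wordVal_eq])]
    cases hg : (decide (w.length = 1) && φ w.head!)
    · simp
    · cases hd : decide (Odd (t.countP (fun w => decide (w.length = 1) && φ w.head!))) <;>
        simp_all [Nat.odd_add_one]

lemma countP_eq_count (x : ℕ) (u : List (List ℕ)) :
    u.countP (fun w => decide (w.length = 1) && decide (w.head! = x)) = u.count [x] := by
  rw [List.count, List.countP_congr]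
  intro w _
  match w with
  | [] => simp
  | [a] => simp; by_cases h : a = x <;> simp [h]
  | a :: b :: t => simp

lemma countP_eq_sum (φ : ℕ → Bool) (u : List (List ℕ)) (T : Finset ℕ)
    (hT : ∀ x : ℕ, [x] ∈ u → x ∈ T) :
    u.countP (fun w => decide (w.length = 1) && φ w.head!) =
      ∑ x ∈ T, if φ x then u.count [x] else 0 := by
  induction u with
  | nil => simp
  | cons w t ih =>
    have hT' : ∀ x, [x] ∈ t → x ∈ T := fun x hx => hT x (List.mem_cons_of_mem _ hx)
    rw [List.countP_cons, ih hT']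
    have step : ∀ x ∈ T, (if φ x then (w :: t).count [x] else 0)
        = (if φ x then t.count [x] else 0) + (if x = w.head! ∧ w.length = 1 then (if φ w.head! then 1 else 0) else 0) := by
      intro x _
      rw [List.count_cons]
      match w with
      | [] => simp
      | [a] =>
        by_cases hx : x = a
        · subst hx; by_cases hp : φ x <;> simp [hp]
        · simp [hx, Ne.symm hx]
      | a :: b :: s => simp
    rw [Finset.sum_congr rfl step, Finset.sum_add_distrib]
    congr 1
    match w with
    | [] => simp
    | [a] =>
      have ha : a ∈ T := hT a List.mem_cons_self
      simp [Finset.sum_ite_eq' T a (fun _ => if φ a then 1 else 0), ha]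
      congr
    | a :: b :: s => simp

/-- Lemma 1.1(9): `Z₇` (addition `xor`, multiplication constantly `false`) satisfies
`u ≈ v` iff for every variable `x`, the one-letter word `[x]` occurs an odd number
of times in `u` exactly when it occurs an odd number of times in `v`. -/
theorem Z7_satisfies_iff (u v : List (List ℕ))
    (hu : u ≠ []) (hv : v ≠ []) (hu' : ∀ w ∈ u, w ≠ []) (hv' : ∀ w ∈ v, w ≠ []) :
    Satisfies (fun x y => xor x y) (fun _ _ => false) u v ↔
      (∀ x : ℕ, (Odd (u.count [x]) ↔ Odd (v.count [x]))) := by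
  constructor
  · intro h x
    have hx := h (fun y => decide (y = x))
    rw [termVal_eq, termVal_eq, countP_eq_count, countP_eq_count] at hx
    simpa using hx
  · intro h φ
    rw [termVal_eq, termVal_eq]
    set T := ((u ++ v).filterMap (fun w => w.head?)).toFinset with hT
    have hTu : ∀ x, [x] ∈ u → x ∈ T := by
      intro x hx
      simp only [hT, List.mem_toFinset, List.mem_filterMap]
      exact ⟨[x], List.mem_append_left _ hx, rfl⟩
    have hTv : ∀ x, [x] ∈ v → x ∈ T := by
      intro x hx
      simp only [hT, List.mem_toFinset, List.mem_filterMap]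
      exact ⟨[x], List.mem_append_right _ hx, rfl⟩
    rw [countP_eq_sum φ u T hTu, countP_eq_sum φ v T hTv]
    have key : (∑ x ∈ T, if φ x then u.count [x] else 0) % 2
        = (∑ x ∈ T, if φ x then v.count [x] else 0) % 2 := by
      rw [Finset.sum_nat_mod, Finset.sum_nat_mod (T) 2 (fun x => if φ x then v.count [x] else 0)]
      congr 1
      apply Finset.sum_congr rfl
      intro x _
      have hcx := h x
      rw [Nat.odd_iff, Nat.odd_iff] at hcx
      by_cases hφ : φ x
      · simp only [hφ, if_true]; omega
      · simp [hφ]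
    simp only [Nat.odd_iff, key]
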